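/- Let M be a real symmetric L×L matrix with 0 ≺ M ≺ B (M positive definite and B − M positive definite) solving the matrix Dyson equation at z = 1, i.e. M^{-1} = B^{-1} + Λ − Diag(λ⊙diag(M)). Then the matrix Q := I_L − Diag(√λ)(B⊙M)Diag(√λ) is positive semidefinite. -/

import Mathlib

open Matrix
open scoped MatrixOrder

lemma hadq {L : ℕ} (A C : Matrix (Fin L) (Fin L) ℝ) (x : Fin L → ℝ) :
    x ⬝ᵥ (A.hadamard C) *ᵥ x
      = trace (diagonal x * A * (diagonal x * Cᵀ)) := by
  simp only [dotProduct, mulVec, trace, Matrix.mul_apply, diag_apply, hadamard_apply,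
    diagonal_apply, Finset.sum_mul, Finset.mul_sum, ite_mul, zero_mul,
    Finset.sum_ite_eq, Finset.mem_univ, if_true, mul_ite, mul_zero, transpose_apply]
  congr 1; ext k
  congr 1; ext l
  ring

lemma trace_mul_self_transpose_nonneg {L : ℕ} (A : Matrix (Fin L) (Fin L) ℝ) :
    0 ≤ trace (A * Aᵀ) := by
  rw [trace]
  refine Finset.sum_nonneg fun i _ => ?_
  rw [diag_apply, Matrix.mul_apply]
  exact Finset.sum_nonneg fun j _ => by simpa [transpose_apply] using mul_self_nonneg (A i j)

lemma fiedler {L : ℕ} {H : Matrix (Fin L) (Fin L) ℝ} (hH : H.PosDef) :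
    (H.hadamard H⁻¹ - 1).PosSemidef := by
  have hHsym : Hᵀ = H := by
    simpa [conjTranspose_eq_transpose_of_trivial] using hH.isHermitian.eq
  have hHinvsym : (H⁻¹)ᵀ = H⁻¹ := by rw [transpose_nonsing_inv, hHsym]
  have hsym' : ∀ a b, H a b = H b a := fun a b => by
    conv_lhs => rw [← hHsym]
    simp
  have hinvsym' : ∀ a b, H⁻¹ a b = H⁻¹ b a := fun a b => by
    conv_lhs => rw [← hHinvsym]
    simp
  set S := CFC.sqrt H with hSdef
  have hS2 : S * S = H := CFC.sqrt_mul_sqrt_self H hH.posSemidef.nonneg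
  have hSsym : Sᵀ = S := by
    simpa [conjTranspose_eq_transpose_of_trivial] using (CFC.sqrt_nonneg H).posSemidef.isHermitian.eq
  have hSdet : IsUnit S.det := by
    refine isUnit_iff_ne_zero.mpr fun h0 => ?_
    have : H.det = 0 := by rw [← hS2, det_mul, h0, mul_zero]
    exact hH.det_pos.ne' this
  have hSS : S * S⁻¹ = 1 := mul_nonsing_inv S hSdet
  have hSS' : S⁻¹ * S = 1 := nonsing_inv_mul S hSdet
  have hHinv : H⁻¹ = S⁻¹ * S⁻¹ := by
    refine inv_eq_right_inv ?_
    rw [← hS2]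
    calc S * S * (S⁻¹ * S⁻¹) = S * (S * S⁻¹) * S⁻¹ := by noncomm_ring
    _ = 1 := by rw [hSS, mul_one, hSS]
  have hSinvsym : (S⁻¹)ᵀ = S⁻¹ := by rw [transpose_nonsing_inv, hSsym]
  refine Matrix.PosSemidef.of_dotProduct_mulVec_nonneg ?_ ?_
  · rw [IsHermitian, conjTranspose_eq_transpose_of_trivial]
    ext k l
    simp only [transpose_apply, Matrix.sub_apply, hadamard_apply, one_apply]
    rw [hsym' l k, hinvsym' l k]
    simp [eq_comm]
  · intro x
    set X := diagonal x with hX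
    have hXsym : Xᵀ = X := diagonal_transpose x
    set P := S * X * S⁻¹ with hP
    have hPT : Pᵀ = S⁻¹ * X * S := by
      rw [hP, transpose_mul, transpose_mul, hSinvsym, hXsym, hSsym]; noncomm_ring
    have key1 : trace (X * H * (X * (H⁻¹)ᵀ)) = trace (P * Pᵀ) := by
      rw [hHinvsym]
      have h1 : P * Pᵀ = S * (X * H⁻¹ * X * S) := by
        rw [hPT, hP, hHinv]; noncomm_ring
      rw [h1, Matrix.trace_mul_comm S, Matrix.mul_assoc (X * H⁻¹ * X) S S, hS2,
        Matrix.trace_mul_comm (X * H)]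
      congr 1
      noncomm_ring
    have key2 : trace (P * P) = x ⬝ᵥ x := by
      have h2 : P * P = S * (X * X) * S⁻¹ := by
        rw [hP]
        calc S * X * S⁻¹ * (S * X * S⁻¹) = S * X * (S⁻¹ * S) * X * S⁻¹ := by noncomm_ring
        _ = S * (X * X) * S⁻¹ := by rw [hSS']; noncomm_ring
      rw [h2, Matrix.trace_mul_comm, ← Matrix.mul_assoc, hSS', Matrix.one_mul]
      simp [hX, dotProduct, trace, diag_apply, Matrix.mul_apply,
        diagonal_apply, Finset.sum_ite_eq]
    have key3 : trace (P * P) ≤ trace (P * Pᵀ) := by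
      have h0 := trace_mul_self_transpose_nonneg (P - Pᵀ)
      have hexp : (P - Pᵀ) * (P - Pᵀ)ᵀ = P * Pᵀ - P * P - (Pᵀ * Pᵀ - Pᵀ * P) := by
        rw [transpose_sub, transpose_transpose]; noncomm_ring
      rw [hexp] at h0
      have e1 : trace (Pᵀ * P) = trace (P * Pᵀ) := Matrix.trace_mul_comm _ _
      have e2 : trace (Pᵀ * Pᵀ) = trace (P * P) := by
        rw [← transpose_mul, trace_transpose]
      simp only [trace_sub, e1, e2] at h0
      linarith
    have hq : x ⬝ᵥ (H.hadamard H⁻¹ - 1) *ᵥ x = trace (P * Pᵀ) - x ⬝ᵥ x := by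
      rw [Matrix.sub_mulVec, dotProduct_sub, hadq, Matrix.one_mulVec, ← key1]
    simp only [star_trivial]
    rw [hq]
    linarith

/-- if the real symmetric matrix `M` with `0 ≺ M ≺ B` solves the matrix Dyson
equation at `z = 1`, i.e. `M⁻¹ = B⁻¹ + Λ − Diag(λ ⊙ diag M)`, then
`Q := I − Diag(√λ)(B⊙M)Diag(√λ)` is positive semidefinite. -/
theorem stmt8 {L : ℕ} (hL : 0 < L) (lam : Fin L → ℝ) (hlam : ∀ l, 0 < lam l)
    (B : Matrix (Fin L) (Fin L) ℝ) (hB : B.PosDef) (hBdiag : ∀ l, B l l = 1)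
    (M : Matrix (Fin L) (Fin L) ℝ) (hMsym : Mᵀ = M)
    (hM : M.PosDef) (hBM : (B - M).PosDef)
    (hMDE : M⁻¹ = B⁻¹ + Matrix.diagonal lam - Matrix.diagonal (fun l => lam l * M l l)) :
    ((1 : Matrix (Fin L) (Fin L) ℝ)
        - Matrix.diagonal (fun l => Real.sqrt (lam l)) * Matrix.hadamard B M *
            Matrix.diagonal (fun l => Real.sqrt (lam l))).PosSemidef := by
  have hm1 : ∀ l, M l l < 1 := by
    intro l
    have hx : (Pi.single l 1 : Fin L → ℝ) ≠ 0 := by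
      intro h; simpa using congrFun h l
    have h := hBM.dotProduct_mulVec_pos hx
    simp only [star_trivial] at h
    rw [show (Pi.single l 1 : Fin L → ℝ) ⬝ᵥ (B - M) *ᵥ Pi.single l 1 = (B - M) l l from by
      simp [dotProduct, mulVec, Pi.single_apply, Finset.sum_ite_eq]] at h
    simp only [Matrix.sub_apply] at h
    linarith [hBdiag l]
  set d : Fin L → ℝ := fun l => lam l * (1 - M l l) with hd
  have hdpos : ∀ l, 0 < d l := fun l => mul_pos (hlam l) (by linarith [hm1 l])
  have hdne : ∀ l, d l ≠ 0 := fun l => (hdpos l).ne'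
  set Δ : Matrix (Fin L) (Fin L) ℝ := diagonal d with hΔ
  set Δi : Matrix (Fin L) (Fin L) ℝ := diagonal (fun l => (d l)⁻¹) with hΔi
  have hΔiΔ : Δi * Δ = 1 := by
    rw [hΔ, hΔi, diagonal_mul_diagonal]
    rw [show (fun l => (d l)⁻¹ * d l) = fun _ => (1 : ℝ) from funext fun l =>
      inv_mul_cancel₀ (hdne l), diagonal_one]
  set H : Matrix (Fin L) (Fin L) ℝ := Δi + B with hH
  have hHpd : H.PosDef := (Matrix.PosDef.diagonal fun l => inv_pos.mpr (hdpos l)).add hB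
  have hMinv : M⁻¹ = B⁻¹ + Δ := by
    rw [hMDE, add_sub_assoc, diagonal_sub, hΔ, hd]
    rw [show (fun i => lam i - lam i * M i i) = fun l => lam l * (1 - M l l) from
      funext fun l => by ring]
  have h1 : B⁻¹ * M + Δ * M = 1 := by
    rw [← Matrix.add_mul, ← hMinv]
    exact nonsing_inv_mul M (isUnit_iff_ne_zero.mpr hM.det_pos.ne')
  have hBB : B * B⁻¹ = 1 := mul_nonsing_inv B (isUnit_iff_ne_zero.mpr hB.det_pos.ne')
  have hBΔM : B * Δ * M = B - M := by
    have h2 := congrArg (fun Z => B * Z) h1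
    simp only [Matrix.mul_add, Matrix.mul_one] at h2
    rw [← Matrix.mul_assoc, ← Matrix.mul_assoc, hBB, Matrix.one_mul] at h2
    exact eq_sub_of_add_eq' h2
  have hHK : H * (Δ - Δ * M * Δ) = 1 := by
    have e : H * (Δ - Δ * M * Δ)
        = Δi * Δ - (Δi * Δ) * (M * Δ) + (B * Δ - (B * Δ * M) * Δ) := by
      rw [hH]; noncomm_ring
    rw [e, hΔiΔ, hBΔM]
    noncomm_ring
  have hHinv : H⁻¹ = Δ - Δ * M * Δ := inv_eq_right_inv hHK
  set E : Matrix (Fin L) (Fin L) ℝ := diagonal (fun l => Real.sqrt (lam l) / d l) with hE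
  have hEH : Eᴴ = E := by
    rw [conjTranspose_eq_transpose_of_trivial, hE, diagonal_transpose]
  have hid : (1 : Matrix (Fin L) (Fin L) ℝ)
      - diagonal (fun l => Real.sqrt (lam l)) * B.hadamard M * diagonal (fun l => Real.sqrt (lam l))
      = E * (H.hadamard H⁻¹ - 1) * Eᴴ := by
    rw [hEH, hHinv, hE, hH, hΔ, hΔi]
    ext k l
    simp only [Matrix.sub_apply, one_apply, mul_diagonal, diagonal_mul, hadamard_apply, Matrix.add_apply,
      diagonal_apply, hd]
    by_cases hkl : k = l
    · subst hkl
      simp only [if_true, hBdiag k]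
      have hs : Real.sqrt (lam k) * Real.sqrt (lam k) = lam k := Real.mul_self_sqrt (hlam k).le
      have h1k : (1 : ℝ) - M k k ≠ 0 := by have := hm1 k; intro h; linarith
      field_simp [(hlam k).ne', h1k]
      ring_nf
      rw [Real.sq_sqrt (hlam k).le]
      ring
    · simp only [hkl, if_false]
      have hdk : lam k * (1 - M k k) ≠ 0 := by
        have := hdne k; simpa [hd] using this
      have hdl : lam l * (1 - M l l) ≠ 0 := by
        have := hdne l; simpa [hd] using this
      field_simp
      rw [eq_div_iff (by simpa [mul_assoc] using mul_ne_zero hdk hdl)]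
      ring
  rw [hid]
  exact (fiedler hHpd).mul_mul_conjTranspose_same E
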